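/- Let {M₁, M₂} be a two-outcome POVM in dimension d. Then for every unit vector φ ∈ ℂ^d there exists a valid decomposition K of {M₁,M₂} with objective ∑_j ⟪φ, (K j j)·φ⟫ ≥ 1 − (λmax(M₁) − λmin(M₁))/2, where λmin(M₁) and λmax(M₁) denote the smallest and largest eigenvalues of M₁. -/

import Mathlib

open Matrix ComplexOrder

noncomputable section

/-- `K` is a valid decomposition of the POVM `M`. -/
def IsDecomp {m d : ℕ} (M : Fin m → Matrix (Fin d) (Fin d) ℂ)
    (K : Fin m → Fin m → Matrix (Fin d) (Fin d) ℂ) : Prop :=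
  (∀ x j, (K x j).PosSemidef) ∧
  (∀ j, (d : ℂ) • ∑ x, K x j = (∑ x, (K x j).trace) • (1 : Matrix (Fin d) (Fin d) ℂ)) ∧
  (∀ x, ∑ j, K x j = M x)

/-- Eve's objective for the decomposition `K` and the state `φ`:
`∑_j ⟪φ, (K j j) φ⟫`. -/
def objective {m d : ℕ} (K : Fin m → Fin m → Matrix (Fin d) (Fin d) ℂ)
    (φ : Fin d → ℂ) : ℝ :=
  ∑ j, (star φ ⬝ᵥ (K j j).mulVec φ).re

/-- smul of a PSD matrix by a nonneg real is PSD. -/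
lemma psd_real_smul {d : ℕ} {A : Matrix (Fin d) (Fin d) ℂ} (hA : A.PosSemidef)
    {c : ℝ} (hc : 0 ≤ c) : ((c : ℂ) • A).PosSemidef := by
  constructor
  · unfold Matrix.IsHermitian
    rw [conjTranspose_smul, hA.1.eq]
    congr 1
    simp [Complex.ext_iff]
  · intro x
    exact (hA.smul (show (0:ℂ) ≤ (c:ℂ) by exact_mod_cast hc)).2 x

/-- Conjugating a nonneg diagonal by the eigenvector unitary is PSD. -/
lemma psd_conj_diag {d : ℕ} {A : Matrix (Fin d) (Fin d) ℂ} (hA : A.IsHermitian)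
    (f : Fin d → ℝ) (hf : ∀ i, 0 ≤ f i) :
    ((hA.eigenvectorUnitary : Matrix (Fin d) (Fin d) ℂ) *
      Matrix.diagonal (fun i => (f i : ℂ)) *
      (star hA.eigenvectorUnitary : Matrix (Fin d) (Fin d) ℂ)).PosSemidef := by
  have hd : (Matrix.diagonal (fun i => ((f i : ℝ) : ℂ))).PosSemidef := by
    rw [Matrix.posSemidef_diagonal_iff]
    intro i
    exact_mod_cast hf i
  simpa [Matrix.star_eq_conjTranspose] using
    hd.mul_mul_conjTranspose_same (hA.eigenvectorUnitary : Matrix (Fin d) (Fin d) ℂ)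

lemma conj_diag_eig {d : ℕ} {A : Matrix (Fin d) (Fin d) ℂ} (hA : A.IsHermitian) (c : ℝ) :
    (hA.eigenvectorUnitary : Matrix (Fin d) (Fin d) ℂ) *
      Matrix.diagonal (fun i => ((c - hA.eigenvalues i : ℝ) : ℂ)) *
      (star hA.eigenvectorUnitary : Matrix (Fin d) (Fin d) ℂ) = (c : ℂ) • 1 - A := by
  have hsp := hA.spectral_theorem
  rw [Unitary.conjStarAlgAut_apply] at hsp
  have e1 : ((c : ℂ) • (1 : Matrix (Fin d) (Fin d) ℂ)) =
      Matrix.diagonal (fun _ : Fin d => (c : ℂ)) := by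
    ext i j
    by_cases h : i = j <;> simp [Matrix.one_apply, Matrix.diagonal_apply, h]
  have h1 : Matrix.diagonal (fun i : Fin d => ((c - hA.eigenvalues i : ℝ) : ℂ)) =
      (c : ℂ) • 1 - Matrix.diagonal (RCLike.ofReal ∘ hA.eigenvalues) := by
    rw [e1]
    ext i j
    by_cases h : i = j
    · subst h; simp [Matrix.sub_apply, Matrix.diagonal_apply_eq]
    · simp [Matrix.sub_apply, Matrix.diagonal_apply_ne _ h]
  rw [h1, Matrix.mul_sub, Matrix.sub_mul, ← hsp]
  congr 1
  rw [Matrix.mul_smul, Matrix.smul_mul, mul_one]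
  have hu : (hA.eigenvectorUnitary : Matrix (Fin d) (Fin d) ℂ) *
      star (hA.eigenvectorUnitary : Matrix (Fin d) (Fin d) ℂ) = 1 :=
    (Unitary.mem_iff.mp hA.eigenvectorUnitary.prop).2
  rw [hu]

lemma conj_diag_eig' {d : ℕ} {A : Matrix (Fin d) (Fin d) ℂ} (hA : A.IsHermitian) (c : ℝ) :
    (hA.eigenvectorUnitary : Matrix (Fin d) (Fin d) ℂ) *
      Matrix.diagonal (fun i => ((hA.eigenvalues i - c : ℝ) : ℂ)) *
      (star hA.eigenvectorUnitary : Matrix (Fin d) (Fin d) ℂ) = A - (c : ℂ) • 1 := by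
  have hneg : Matrix.diagonal (fun i : Fin d => ((hA.eigenvalues i - c : ℝ) : ℂ)) =
      -(Matrix.diagonal fun i : Fin d => ((c - hA.eigenvalues i : ℝ) : ℂ)) := by
    ext i j
    by_cases h : i = j
    · subst h; simp [Matrix.neg_apply, Matrix.diagonal_apply_eq]
    · simp [Matrix.neg_apply, Matrix.diagonal_apply_ne _ h]
  rw [hneg, Matrix.mul_neg, Matrix.neg_mul, conj_diag_eig hA c, neg_sub]

/-- If all eigenvalues of a Hermitian `A` are at most `c`, then `c•1 - A` is PSD. -/
lemma psd_smul_one_sub {d : ℕ} {A : Matrix (Fin d) (Fin d) ℂ} (hA : A.IsHermitian)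
    {c : ℝ} (h : ∀ i, hA.eigenvalues i ≤ c) : ((c : ℂ) • 1 - A).PosSemidef := by
  rw [← conj_diag_eig hA c]
  exact psd_conj_diag hA _ (fun i => by linarith [h i])

/-- If all eigenvalues of a Hermitian `A` are at least `c`, then `A - c•1` is PSD. -/
lemma psd_sub_smul_one {d : ℕ} {A : Matrix (Fin d) (Fin d) ℂ} (hA : A.IsHermitian)
    {c : ℝ} (h : ∀ i, c ≤ hA.eigenvalues i) : (A - (c : ℂ) • 1).PosSemidef := by
  rw [← conj_diag_eig' hA c]
  exact psd_conj_diag hA _ (fun i => by linarith [h i])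

/-- The eigenvector has unit dot product with itself. -/
lemma eigvec_dot_self {d : ℕ} {A : Matrix (Fin d) (Fin d) ℂ} (hA : A.IsHermitian) (i : Fin d) :
    star (⇑(hA.eigenvectorBasis i)) ⬝ᵥ ⇑(hA.eigenvectorBasis i) = 1 := by
  have h1 : (inner ℂ (hA.eigenvectorBasis i) (hA.eigenvectorBasis i) : ℂ) = 1 := by
    rw [inner_self_eq_norm_sq_to_K, hA.eigenvectorBasis.orthonormal.1 i]
    norm_num
  rw [EuclideanSpace.inner_eq_star_dotProduct, dotProduct_comm] at h1
  exact h1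

/-- Eigenvalues of `M 0` are at most 1 when `1 - M 0` is PSD. -/
lemma eig_le_one {d : ℕ} {A : Matrix (Fin d) (Fin d) ℂ} (hA : A.IsHermitian)
    (hps : ((1 : Matrix (Fin d) (Fin d) ℂ) - A).PosSemidef) (i : Fin d) :
    hA.eigenvalues i ≤ 1 := by
  set v : Fin d → ℂ := ⇑(hA.eigenvectorBasis i) with hv
  have h1 := hps.re_dotProduct_nonneg v
  have h2 : star v ⬝ᵥ ((1 - A) *ᵥ v) = 1 - star v ⬝ᵥ (A *ᵥ v) := by
    rw [Matrix.sub_mulVec, dotProduct_sub, Matrix.one_mulVec, eigvec_dot_self hA i]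
  rw [h2] at h1
  have h3 := hA.eigenvalues_eq i
  simp only [map_sub, Complex.one_re, RCLike.one_re] at h1
  rw [← hv] at h3
  linarith [h1, h3.ge]

/-- Lower bound on the guessing probability of any two-outcome POVM in dimension `d`:
for every unit state `φ` there is a valid decomposition with objective at least
`1 − (λmax(M₁) − λmin(M₁))/2`. -/
theorem pguess_two_outcome_dim_d_lower_bound
    {d : ℕ}
    (M : Fin 2 → Matrix (Fin d) (Fin d) ℂ)
    (hpsd : ∀ x, (M x).PosSemidef) (hsum : ∑ x, M x = 1)
    (φ : Fin d → ℂ) (hφ : star φ ⬝ᵥ φ = 1) :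
    ∃ K : Fin 2 → Fin 2 → Matrix (Fin d) (Fin d) ℂ, IsDecomp M K ∧
      1 - ((⨆ i, (hpsd 0).isHermitian.eigenvalues i)
        - (⨅ i, (hpsd 0).isHermitian.eigenvalues i)) / 2 ≤ objective K φ := by
  classical
  rcases Nat.eq_zero_or_pos d with hd | hd
  · exfalso
    subst hd
    simp [dotProduct] at hφ
  have : NeZero d := ⟨hd.ne'⟩
  set A := M 0 with hA0
  set hA : A.IsHermitian := (hpsd 0).isHermitian with hhA
  set eig : Fin d → ℝ := hA.eigenvalues with heig
  set a : ℝ := ⨅ i, eig i with ha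
  set b : ℝ := ⨆ i, eig i with hb
  have hM1 : M 1 = 1 - A := by
    have := hsum
    rw [Fin.sum_univ_two] at this
    rw [← this, hA0]; abel
  have hbddA : BddAbove (Set.range eig) := (Set.finite_range eig).bddAbove
  have hbddB : BddBelow (Set.range eig) := (Set.finite_range eig).bddBelow
  have ha_le : ∀ i, a ≤ eig i := fun i => ciInf_le hbddB i
  have hle_b : ∀ i, eig i ≤ b := fun i => le_ciSup hbddA i
  have h0a : 0 ≤ a := le_ciInf fun i => (hpsd 0).eigenvalues_nonneg i
  have heig1 : ∀ i, eig i ≤ 1 := by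
    intro i
    apply eig_le_one hA _ i
    rw [← hM1]; exact hpsd 1
  have hb1 : b ≤ 1 := ciSup_le heig1
  -- the decomposition
  set K : Fin 2 → Fin 2 → Matrix (Fin d) (Fin d) ℂ :=
    ![![((1/2 : ℝ) : ℂ) • (A + (a:ℂ) • 1), ((1/2 : ℝ) : ℂ) • (A - (a:ℂ) • 1)],
      ![((1/2 : ℝ) : ℂ) • ((b:ℂ) • 1 - A), ((1/2 : ℝ) : ℂ) • (((2 - b : ℝ):ℂ) • 1 - A)]] with hK
  refine ⟨K, ⟨?_, ?_, ?_⟩, ?_⟩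
  · -- PSD
    have h00 : (A + (a:ℂ) • 1).PosSemidef :=
      (hpsd 0).add (psd_real_smul (Matrix.PosSemidef.one (n := Fin d) (R := ℂ)) h0a)
    have h01 : (A - (a:ℂ) • 1).PosSemidef := psd_sub_smul_one hA ha_le
    have h10 : ((b:ℂ) • 1 - A).PosSemidef := psd_smul_one_sub hA hle_b
    have h11 : ((((2 - b : ℝ)):ℂ) • 1 - A).PosSemidef :=
      psd_smul_one_sub hA (fun i => by linarith [heig1 i])
    intro x j
    fin_cases x <;> fin_cases j
    · show (((1/2 : ℝ) : ℂ) • (A + (a:ℂ) • 1)).PosSemidef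
      exact psd_real_smul h00 (by norm_num)
    · show (((1/2 : ℝ) : ℂ) • (A - (a:ℂ) • 1)).PosSemidef
      exact psd_real_smul h01 (by norm_num)
    · show (((1/2 : ℝ) : ℂ) • ((b:ℂ) • 1 - A)).PosSemidef
      exact psd_real_smul h10 (by norm_num)
    · show (((1/2 : ℝ) : ℂ) • (((2 - b : ℝ):ℂ) • 1 - A)).PosSemidef
      exact psd_real_smul h11 (by norm_num)
  · -- column condition
    intro j
    have hcol : ∀ j, ∃ c : ℝ, ∑ x, K x j = (c : ℂ) • 1 := by
      intro j
      fin_cases j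
      · refine ⟨(a + b)/2, ?_⟩
        rw [Fin.sum_univ_two]
        show ((1/2 : ℝ) : ℂ) • (A + (a:ℂ) • 1) + ((1/2 : ℝ) : ℂ) • ((b:ℂ) • 1 - A)
          = (((a + b)/2 : ℝ) : ℂ) • 1
        push_cast
        module
      · refine ⟨(2 - a - b)/2, ?_⟩
        rw [Fin.sum_univ_two]
        show ((1/2 : ℝ) : ℂ) • (A - (a:ℂ) • 1) + ((1/2 : ℝ) : ℂ) • (((2 - b : ℝ):ℂ) • 1 - A)
          = (((2 - a - b)/2 : ℝ) : ℂ) • 1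
        push_cast
        module
    obtain ⟨c, hc⟩ := hcol j
    have htr : ∑ x, (K x j).trace = (c : ℂ) * d := by
      rw [← Matrix.trace_sum, hc, Matrix.trace_smul, Matrix.trace_one]
      simp [Finset.card_univ]
    rw [hc, htr, smul_smul, mul_comm ((d:ℂ)) (c:ℂ)]
  · -- row condition
    intro x
    fin_cases x
    · rw [Fin.sum_univ_two]
      show ((1/2 : ℝ) : ℂ) • (A + (a:ℂ) • 1) + ((1/2 : ℝ) : ℂ) • (A - (a:ℂ) • 1) = M 0
      rw [← hA0]
      push_cast
      module
    · rw [Fin.sum_univ_two]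
      show ((1/2 : ℝ) : ℂ) • ((b:ℂ) • 1 - A) + ((1/2 : ℝ) : ℂ) • (((2 - b : ℝ):ℂ) • 1 - A) = M 1
      rw [hM1]
      push_cast
      module
  · -- objective
    have hdiagsum : K 0 0 + K 1 1 = ((1 - (b - a)/2 : ℝ) : ℂ) • 1 := by
      show ((1/2 : ℝ) : ℂ) • (A + (a:ℂ) • 1) + ((1/2 : ℝ) : ℂ) • (((2 - b : ℝ):ℂ) • 1 - A)
        = ((1 - (b - a)/2 : ℝ) : ℂ) • 1
      push_cast
      module
    have hobj : objective K φ = 1 - (b - a)/2 := by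
      unfold objective
      rw [Fin.sum_univ_two, ← Complex.add_re, ← dotProduct_add, ← Matrix.add_mulVec,
        hdiagsum, Matrix.smul_mulVec, Matrix.one_mulVec, dotProduct_smul, hφ]
      simp
    rw [hobj]
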